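/- Let Π be any set of lattice roots of Γ^{2,2} such that every lattice root α satisfies: α or -α is a (finite, nonempty) sum of elements of Π (i.e. lies in the additive submonoid of ℤ⁴ generated by Π). Then there is no ρ ∈ ℤ⁴ with B(ρ,π) = 1 for all π ∈ Π. In other words, no candidate system of fundamental roots of Γ^{2,2} admits a Weyl vector in Γ^{2,2}. -/

import Mathlib

/-- The bilinear form of the even self-dual lattice `Γ^{2,2}`:
`B(x,y) = -(x₁y₂ + x₂y₁) - (x₃y₄ + x₄y₃)`. -/
def GammaB (x y : Fin 4 → ℤ) : ℤ :=
  -(x 0 * y 1 + x 1 * y 0) - (x 2 * y 3 + x 3 * y 2)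

/-- A lattice root of `Γ^{2,2}`: an element `(k,l,m,n)` with `kl + mn = -1`,
equivalently of norm `B(α,α) = 2`. -/
def IsLatticeRoot (α : Fin 4 → ℤ) : Prop :=
  α 0 * α 1 + α 2 * α 3 = -1

/- Auxiliary predicate: for the matrix `A = [[a,b],[c,d]]`, there exists
`Y = [[x,y],[z,w]]` with `det Y = -1` and `tr (A * Y) = 0`. -/
private def AuxP (a b c d : ℤ) : Prop :=
  ∃ x y z w : ℤ, x * w - y * z = -1 ∧ a * x + c * y + b * z + d * w = 0

private lemma auxOp1 (a b c d t : ℤ) (h : AuxP a b (c + t * a) (d + t * b)) :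
    AuxP a b c d := by
  obtain ⟨x, y, z, w, h1, h2⟩ := h
  exact ⟨x + t * y, y, z + t * w, w, by linear_combination h1, by linear_combination h2⟩

private lemma auxOp2 (a b c d t : ℤ) (h : AuxP (a + t * c) (b + t * d) c d) :
    AuxP a b c d := by
  obtain ⟨x, y, z, w, h1, h2⟩ := h
  exact ⟨x, y + t * x, z, w + t * z, by linear_combination h1, by linear_combination h2⟩

private lemma auxOp4 (a b c d t : ℤ) (h : AuxP a (b + t * a) c (d + t * c)) :
    AuxP a b c d := by
  obtain ⟨x, y, z, w, h1, h2⟩ := h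
  exact ⟨x + t * z, y + t * w, z, w, by linear_combination h1, by linear_combination h2⟩

private lemma auxTranspose (a b c d : ℤ) (h : AuxP a c b d) : AuxP a b c d := by
  obtain ⟨x, y, z, w, h1, h2⟩ := h
  exact ⟨x, z, y, w, by linear_combination h1, by linear_combination h2⟩

private lemma auxDiag (a d : ℤ) : AuxP a 0 0 d :=
  ⟨d, 1, 1 - a * d, -a, by ring, by ring⟩

/-- The case `a = c = 0`, i.e. the matrix `[[0,b],[0,d]]`, via Bézout. -/
private lemma auxZero (b d : ℤ) : AuxP 0 b 0 d := by
  by_cases hbd : b = 0 ∧ d = 0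
  · exact ⟨0, 1, 1, 0, by ring, by simp [hbd.1, hbd.2]⟩
  · have hg : (Int.gcd b d : ℤ) ≠ 0 := by
      simp only [ne_eq, Int.natCast_eq_zero, Int.gcd_eq_zero_iff]
      exact hbd
    set g : ℤ := (Int.gcd b d : ℤ) with hgdef
    obtain ⟨b', hb'⟩ : g ∣ b := Int.gcd_dvd_left b d
    obtain ⟨d', hd'⟩ : g ∣ d := Int.gcd_dvd_right b d
    set u := Int.gcdA b d
    set v := Int.gcdB b d
    have hbez : g = b * u + d * v := Int.gcd_eq_gcd_ab b d
    have key : u * b' + v * d' = 1 := by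
      have h2 : g * (u * b' + v * d') = g * 1 := by
        rw [hb', hd'] at hbez; linear_combination -hbez
      exact mul_left_cancel₀ hg h2
    refine ⟨u, v, d', -b', by linear_combination -key, ?_⟩
    rw [hb', hd']; ring

/-- Main Euclidean induction: `AuxP` holds whenever `a ≠ 0`. -/
private lemma auxMain : ∀ n : ℕ, ∀ a b c d : ℤ, a.natAbs ≤ n → a ≠ 0 → AuxP a b c d := by
  intro n
  induction n with
  | zero => intro a b c d hn ha; omega
  | succ n ih =>
    -- the case `¬ a ∣ c` (Euclidean descent)
    have step : ∀ a b c d : ℤ, a.natAbs ≤ n + 1 → a ≠ 0 → ¬ a ∣ c → AuxP a b c d := by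
      intro a b c d hn ha hnc
      have hr0 : c % a ≠ 0 := fun h => hnc (Int.dvd_of_emod_eq_zero h)
      apply auxOp1 a b c d (-(c / a))
      have e1 : c + -(c / a) * a = c % a := by
        have := Int.mul_ediv_add_emod c a; linarith
      rw [e1]
      have hb1 : (c % a).natAbs < a.natAbs := by
        have h1a : 0 ≤ c % a := Int.emod_nonneg c ha
        have h1b : c % a < |a| := by
          have := Int.emod_lt c ha; rw [Int.abs_eq_natAbs]; exact this
        rw [Int.abs_eq_natAbs] at h1b
        omega
      apply auxOp2 _ _ _ _ (-(a / (c % a)))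
      have e2 : a + -(a / (c % a)) * (c % a) = a % (c % a) := by
        have := Int.mul_ediv_add_emod a (c % a); linarith
      rw [e2]
      by_cases h2 : a % (c % a) = 0
      · rw [h2]
        apply auxOp2 _ _ _ _ 1
        have e3 : (0 : ℤ) + 1 * (c % a) = c % a := by ring
        rw [e3]
        exact ih (c % a) _ _ _ (by omega) hr0
      · have hb2 : (a % (c % a)).natAbs < (c % a).natAbs := by
          have h2a : 0 ≤ a % (c % a) := Int.emod_nonneg a hr0
          have h2b : a % (c % a) < |c % a| := by
            have := Int.emod_lt a hr0; rw [Int.abs_eq_natAbs]; exact this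
          rw [Int.abs_eq_natAbs] at h2b
          omega
        exact ih (a % (c % a)) _ _ _ (by omega) h2
    intro a b c d hn ha
    by_cases hc : a ∣ c
    · by_cases hb : a ∣ b
      · obtain ⟨q, hq⟩ := hc
        obtain ⟨q2, hq2⟩ := hb
        apply auxOp1 a b c d (-q)
        have e1 : c + -q * a = 0 := by rw [hq]; ring
        rw [e1]
        apply auxOp4 _ _ _ _ (-q2)
        have e2 : b + -q2 * a = 0 := by rw [hq2]; ring
        rw [e2, show d + -q * b + -q2 * 0 = d + -q * b by ring]
        exact auxDiag a _
      · exact auxTranspose _ _ _ _ (step a c b d hn ha hb)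
    · exact step a b c d hn ha hc

private lemma auxAll (a b c d : ℤ) : AuxP a b c d := by
  by_cases ha : a = 0
  · subst ha
    by_cases hc : c = 0
    · subst hc; exact auxZero b d
    · apply auxOp2 0 b c d 1
      rw [show (0 : ℤ) + 1 * c = c by ring]
      exact auxMain c.natAbs c _ c d le_rfl hc
  · exact auxMain a.natAbs a b c d le_rfl ha

/-- Every `ρ ∈ ℤ⁴` is orthogonal (for `GammaB`) to some lattice root. -/
private lemma exists_ortho_root (ρ : Fin 4 → ℤ) :
    ∃ α : Fin 4 → ℤ, IsLatticeRoot α ∧ GammaB ρ α = 0 := by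
  obtain ⟨x, y, z, w, h1, h2⟩ := auxAll (-ρ 1) (ρ 2) (-ρ 3) (-ρ 0)
  refine ⟨![x, w, y, -z], ?_, ?_⟩
  · show x * w + y * (-z) = -1
    linear_combination h1
  · show -(ρ 0 * w + ρ 1 * x) - (ρ 2 * (-z) + ρ 3 * y) = 0
    linear_combination h2

private lemma gammaB_add (ρ β γ : Fin 4 → ℤ) :
    GammaB ρ (β + γ) = GammaB ρ β + GammaB ρ γ := by
  simp only [GammaB, Pi.add_apply]; ring

private lemma closure_pos (ρ : Fin 4 → ℤ) (Pi : Set (Fin 4 → ℤ))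
    (hw : ∀ π ∈ Pi, GammaB ρ π = 1) :
    ∀ β ∈ AddSubmonoid.closure Pi, β = 0 ∨ 1 ≤ GammaB ρ β := by
  intro β hβ
  induction hβ using AddSubmonoid.closure_induction with
  | mem π hπ => right; rw [hw π hπ]
  | zero => left; rfl
  | add β γ _ _ ihβ ihγ =>
    rcases ihβ with rfl | hβ1
    · rcases ihγ with rfl | hγ1
      · left; rw [add_zero]
      · right; rw [zero_add]; exact hγ1
    · rcases ihγ with rfl | hγ1
      · right; rw [add_zero]; exact hβ1
      · right; rw [gammaB_add]; linarith

/-- No candidate system `Pi` of fundamental roots of `Γ^{2,2}` (a set of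
lattice roots such that every lattice root, or its negative, is a sum of
elements of `Pi`) admits a Weyl vector, i.e. a `ρ ∈ ℤ⁴` with `B(ρ,π) = 1`
for all `π ∈ Pi`. -/
theorem no_weyl_vector_for_fundamental_roots (Pi : Set (Fin 4 → ℤ))
    (hroots : ∀ π ∈ Pi, IsLatticeRoot π)
    (hgen : ∀ α : Fin 4 → ℤ, IsLatticeRoot α →
      α ∈ AddSubmonoid.closure Pi ∨ -α ∈ AddSubmonoid.closure Pi) :
    ¬ ∃ ρ : Fin 4 → ℤ, ∀ π ∈ Pi, GammaB ρ π = 1 := by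
  rintro ⟨ρ, hρ⟩
  obtain ⟨α, hα, h0⟩ := exists_ortho_root ρ
  have hα0 : α ≠ 0 := by
    intro h
    rw [h] at hα
    simp [IsLatticeRoot] at hα
  have hneg : GammaB ρ (-α) = 0 := by
    show -(ρ 0 * (-(α 1)) + ρ 1 * (-(α 0))) - (ρ 2 * (-(α 3)) + ρ 3 * (-(α 2))) = 0
    simp only [GammaB] at h0
    linarith
  rcases hgen α hα with hmem | hmem
  · rcases closure_pos ρ Pi hρ α hmem with h | h
    · exact hα0 h
    · omega
  · rcases closure_pos ρ Pi hρ (-α) hmem with h | h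
    · exact hα0 (neg_eq_zero.mp h)
    · omega
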